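/- For all integers α ≥ 1 and β ≥ 0, there exists an integer d₀ such that for all integers d ≥ d₀ and n satisfying n ≥ 2d and n ≥ d + 2^{2α+1}, the inequality (1 - (1/α)/(β + d/α))^{2α+1} + 2/(β + d/α) ≤ 1 - 2/f_{α,β}(d, n) holds. -/

import Mathlib

set_option maxHeartbeats 1000000 in
/-- Claim 3.2: for all integers `α ≥ 1` and `β ≥ 0` there is a threshold `d₀`
such that for all `d ≥ d₀` and `n ≥ 2d` with `n ≥ d + 2^{2α+1}`,
`(1 - (1/α)/(β + d/α))^{2α+1} + 2/(β + d/α) ≤ 1 - 2/f_{α,β}(d,n)`, where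
`f_{α,β}(d,n) = (n-d)^{log₂(β + d/α)}`. -/
theorem claim_threshold (α β : ℕ) (hα : 1 ≤ α) :
    ∃ d₀ : ℕ, ∀ d n : ℕ, d₀ ≤ d → 2 * d ≤ n → d + 2 ^ (2 * α + 1) ≤ n →
      (1 - (1 / (α : ℝ)) / ((β : ℝ) + (d : ℝ) / α)) ^ (2 * α + 1)
        + 2 / ((β : ℝ) + (d : ℝ) / α)
      ≤ 1 - 2 / (((n : ℝ) - d) ^ Real.logb 2 ((β : ℝ) + (d : ℝ) / α)) := by
  refine ⟨18 * α ^ 2 + 4 * α * β + 4, fun d n hd hn2 _ => ?_⟩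
  have hα1 : (1 : ℝ) ≤ α := by exact_mod_cast hα
  have hαpos : (0 : ℝ) < α := by linarith
  set x : ℝ := (β : ℝ) + (d : ℝ) / α with hxdef
  have hβ0 : (0 : ℝ) ≤ β := Nat.cast_nonneg β
  have hd18 : (18 * α ^ 2 : ℝ) ≤ d := by exact_mod_cast le_trans (by omega) hd
  have hd4αβ : (4 * α * β + 4 : ℝ) ≤ d := by exact_mod_cast le_trans (by omega) hd
  have hdpos : (4 : ℝ) ≤ (d : ℝ) := by
    have : (4 : ℕ) ≤ d := by omega
    exact_mod_cast this
  have hx18 : 18 * (α : ℝ) ≤ x := by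
    have h1 : 18 * (α : ℝ) ≤ (d : ℝ) / α := by
      rw [le_div_iff₀ hαpos]; nlinarith
    have : (0:ℝ) ≤ β := hβ0
    simp only [hxdef]; linarith
  have hx4 : (4 : ℝ) ≤ x := by nlinarith
  have hxpos : (0 : ℝ) < x := by linarith
  -- the small parameter t = (1/α)/x
  set t : ℝ := (1 / (α : ℝ)) / x with htdef
  have htpos : 0 < t := by positivity
  have htmul : t * (α * x) = 1 := by
    rw [htdef]; field_simp
  have hax18 : (18 : ℝ) ≤ (α : ℝ) * x := by nlinarith
  have ht1 : t ≤ 1 / 18 := by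
    rw [htdef, div_div, div_le_div_iff₀ (by positivity) (by norm_num)]
    linarith
  -- Step A: (1-t)^(2α+1) ≤ 1 - m t + (m t)^2 with m = 2α+1
  set m : ℕ := 2 * α + 1 with hmdef
  have hmR : ((m : ℝ)) = 2 * (α : ℝ) + 1 := by push_cast [hmdef]; ring
  have hBern : 1 + (m : ℝ) * t ≤ (1 + t) ^ m := by
    have := one_add_mul_le_pow (a := t) (by linarith : (-2:ℝ) ≤ t) m
    linarith
  have hkey : (1 - t) ^ m * (1 + (m : ℝ) * t) ≤ 1 := by
    have h1 : (1 - t) ^ m * (1 + (m : ℝ) * t) ≤ (1 - t) ^ m * (1 + t) ^ m := by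
      apply mul_le_mul_of_nonneg_left hBern
      exact pow_nonneg (by linarith) m
    have h2 : (1 - t) ^ m * (1 + t) ^ m = (1 - t ^ 2) ^ m := by
      rw [← mul_pow]; ring_nf
    have h3 : (1 - t ^ 2) ^ m ≤ 1 := by
      apply pow_le_one₀ <;> nlinarith
    linarith
  have hA : (1 - t) ^ m ≤ 1 - (m : ℝ) * t + ((m : ℝ) * t) ^ 2 := by
    have hs : (0 : ℝ) < 1 + (m : ℝ) * t := by positivity
    have h4 : (1 - (m : ℝ) * t + ((m : ℝ) * t) ^ 2) * (1 + (m : ℝ) * t) =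
        1 + ((m : ℝ) * t) ^ 3 := by ring
    have hs3 : (0:ℝ) ≤ ((m : ℝ) * t) ^ 3 := by positivity
    have h5 : (1 - t) ^ m * (1 + (m : ℝ) * t) ≤
        (1 - (m : ℝ) * t + ((m : ℝ) * t) ^ 2) * (1 + (m : ℝ) * t) := by
      rw [h4]; linarith
    exact le_of_mul_le_mul_right h5 hs
  -- Step B : m t = 2/x + t and m t ≤ 3/x
  have hmt : (m : ℝ) * t = 2 / x + t := by
    rw [hmR, htdef]
    field_simp
  have htx : t ≤ 1 / x := by
    rw [htdef, div_div]
    apply one_div_le_one_div_of_le hxpos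
    nlinarith
  have hmt3 : (m : ℝ) * t ≤ 3 / x := by
    rw [hmt]
    have h3x : (3:ℝ) / x = 2 / x + 1 / x := by ring
    rw [h3x]
    linarith
  -- Step C : 9/x^2 ≤ t/2  (since t = 1/(αx) and x ≥ 18α)
  have hC : 9 / x ^ 2 ≤ t / 2 := by
    have ht2 : t / 2 = 1 / (2 * α * x) := by
      rw [htdef]; field_simp
    rw [ht2, div_le_div_iff₀ (by positivity) (by positivity)]
    nlinarith [mul_le_mul_of_nonneg_right hx18 hxpos.le]
  -- Step D : 2/((n-d)^L) ≤ t/2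
  set L : ℝ := Real.logb 2 x with hLdef
  have hL2 : (2 : ℝ) ≤ L := by
    rw [hLdef, Real.le_logb_iff_rpow_le (by norm_num) hxpos]
    rw [show ((2:ℝ) ^ (2:ℝ)) = 4 by
      rw [show (2:ℝ) = ((2:ℕ):ℝ) from by norm_num, Real.rpow_natCast]; norm_num]
    exact hx4
  have hnd : (d : ℝ) ≤ (n : ℝ) - d := by
    have : (2 * d : ℕ) ≤ n := hn2
    have : ((2 * d : ℕ) : ℝ) ≤ n := by exact_mod_cast this
    push_cast at this; linarith
  have hnd1 : (1 : ℝ) ≤ (n : ℝ) - d := by linarith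
  have hpow : (d : ℝ) ^ 2 ≤ ((n : ℝ) - d) ^ L := by
    have h1 : ((n : ℝ) - d) ^ (2 : ℝ) ≤ ((n : ℝ) - d) ^ L :=
      Real.rpow_le_rpow_of_exponent_le hnd1 hL2
    have h2 : ((n : ℝ) - d) ^ (2 : ℝ) = ((n : ℝ) - d) ^ (2 : ℕ) := by
      rw [← Real.rpow_natCast]; norm_num
    have h3 : (d : ℝ) ^ 2 ≤ ((n : ℝ) - d) ^ (2 : ℕ) := by
      apply pow_le_pow_left₀ (by linarith) hnd 2
    rw [h2] at h1; linarith
  have hd2 : 4 * (α : ℝ) * x ≤ (d : ℝ) ^ 2 := by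
    have hax : (α : ℝ) * x = α * β + d := by
      rw [hxdef]; field_simp
    nlinarith
  have hpowpos : (0 : ℝ) < ((n : ℝ) - d) ^ L := by positivity
  have hD : 2 / (((n : ℝ) - d) ^ L) ≤ t / 2 := by
    have h1 : 2 / (((n : ℝ) - d) ^ L) ≤ 2 / (4 * (α : ℝ) * x) := by
      apply div_le_div_of_nonneg_left (by norm_num) (by positivity)
      linarith [hpow, hd2]
    have h2 : 2 / (4 * (α : ℝ) * x) = t / 2 := by
      rw [htdef]; field_simp; ring
    linarith
  -- combine
  have hmt9 : ((m : ℝ) * t) ^ 2 ≤ 9 / x ^ 2 := by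
    have h0 : 0 ≤ (m : ℝ) * t := by positivity
    have : ((m : ℝ) * t) ^ 2 ≤ (3 / x) ^ 2 := by nlinarith
    have h9 : (3 / x) ^ 2 = 9 / x ^ 2 := by rw [div_pow]; norm_num
    linarith [this, h9.le]
  calc (1 - t) ^ m + 2 / x
      ≤ (1 - (m : ℝ) * t + ((m : ℝ) * t) ^ 2) + 2 / x := by linarith
    _ = 1 - t + ((m : ℝ) * t) ^ 2 := by rw [hmt]; ring
    _ ≤ 1 - t + 9 / x ^ 2 := by linarith
    _ ≤ 1 - t + t / 2 := by linarith
    _ = 1 - t / 2 := by ring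
    _ ≤ 1 - 2 / (((n : ℝ) - d) ^ L) := by linarith
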